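/- The integral ∫_{t₀}^{1/2} (1 - 2t)·(1/3 + t - 3t² - √(1 - 4t²)) dt with t₀ = 0.4981 is positive; consequently ε = 24·∫_{t₀}^{1/2} (1-2t)(1/3 + t - 3t² - √(1-4t²)) dt > 10⁻⁶. -/

import Mathlib

open MeasureTheory

/-- the integral `∫_{0.4981}^{1/2} (1-2t)(1/3 + t - 3t² - √(1-4t²)) dt`
is positive, and `ε = 24` times it exceeds `10⁻⁶`. -/
theorem statement15 :
    0 < ∫ t in (0.4981 : ℝ)..(1 / 2 : ℝ),
        (1 - 2 * t) * (1 / 3 + t - 3 * t ^ 2 - Real.sqrt (1 - 4 * t ^ 2)) ∧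
    (1 / 1000000 : ℝ) <
      24 * ∫ t in (0.4981 : ℝ)..(1 / 2 : ℝ),
        (1 - 2 * t) * (1 / 3 + t - 3 * t ^ 2 - Real.sqrt (1 - 4 * t ^ 2)) := by
  have key : (283006252879/5340000000000000000 : ℝ) ≤
      ∫ t in (0.4981 : ℝ)..(1 / 2 : ℝ),
        (1 - 2 * t) * (1 / 3 + t - 3 * t ^ 2 - Real.sqrt (1 - 4 * t ^ 2)) := by
    have hab : (0.4981 : ℝ) ≤ 1 / 2 := by norm_num
    have hfc : Continuous (fun t : ℝ =>
        (-9176263/667500 : ℝ) + (18885013/333750) * t + (-5445/89) * t ^ 2 + 6 * t ^ 3) := by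
      fun_prop
    have hgc : Continuous (fun t : ℝ =>
        (1 - 2 * t) * (1 / 3 + t - 3 * t ^ 2 - Real.sqrt (1 - 4 * t ^ 2))) := by
      fun_prop
    have hle : ∀ x ∈ Set.Icc (0.4981 : ℝ) (1 / 2),
        (-9176263/667500 : ℝ) + (18885013/333750) * x + (-5445/89) * x ^ 2 + 6 * x ^ 3 ≤
        (1 - 2 * x) * (1 / 3 + x - 3 * x ^ 2 - Real.sqrt (1 - 4 * x ^ 2)) := by
      intro x hx
      obtain ⟨hx1, hx2⟩ := hx
      have hL0 : (0 : ℝ) ≤ (2 - 4 * x) * (625/89) + 89/2500 := by nlinarith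
      have hsq : Real.sqrt (1 - 4 * x ^ 2) ≤ (2 - 4 * x) * (625/89) + 89/2500 := by
        rw [show (2 - 4 * x) * (625/89) + 89/2500 =
            Real.sqrt (((2 - 4 * x) * (625/89) + 89/2500) ^ 2) from
          (Real.sqrt_sq hL0).symm]
        apply Real.sqrt_le_sqrt
        nlinarith [sq_nonneg (1 - 2 * x), sq_nonneg ((2 - 4 * x) - (89/1250) ^ 2)]
      have h12 : (0 : ℝ) ≤ 1 - 2 * x := by linarith
      nlinarith [mul_le_mul_of_nonneg_left hsq h12]
    have hmono := intervalIntegral.integral_mono_on (μ := volume) hab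
      (hfc.intervalIntegrable _ _) (hgc.intervalIntegrable _ _) hle
    have hint : ∫ t in (0.4981 : ℝ)..(1 / 2 : ℝ),
        ((-9176263/667500 : ℝ) + (18885013/333750) * t + (-5445/89) * t ^ 2 + 6 * t ^ 3) =
        283006252879/5340000000000000000 := by
      have hd : ∀ x ∈ Set.uIcc (0.4981 : ℝ) (1 / 2),
          HasDerivAt (fun y : ℝ =>
            ((-9176263/667500 : ℝ) * y + (18885013/667500) * y ^ 2) +
              ((-1815/89) * y ^ 3 + (3/2) * y ^ 4))
            ((-9176263/667500 : ℝ) + (18885013/333750) * x + (-5445/89) * x ^ 2 + 6 * x ^ 3)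
            x := by
        intro x _
        have h := (((hasDerivAt_id x).const_mul (-9176263/667500 : ℝ)).add
            ((hasDerivAt_pow 2 x).const_mul (18885013/667500 : ℝ))).add
          (((hasDerivAt_pow 3 x).const_mul (-1815/89 : ℝ)).add
            ((hasDerivAt_pow 4 x).const_mul (3/2 : ℝ)))
        exact h.congr_deriv (by push_cast; ring)
      rw [intervalIntegral.integral_eq_sub_of_hasDerivAt hd (hfc.intervalIntegrable _ _)]
      norm_num
    linarith
  constructor <;> nlinarith [key]
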